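/- arXiv:2303.10277 — 3 statements merged into one kernel-verified Lean document; each statement's English description precedes it below -/
import Mathlib

section
/- Let X ⊆ ℝ^{n_x}, U ⊆ ℝ^{n_u}, and let Φ : ℝ^{n_x} → ℝ^{n_z} be differentiable with Jacobian ∇Φ(x). Let f : X → ℝ^{n_x}, g(x) an n_x × n_u matrix, f_z : ℝ^{n_z} → ℝ^{n_z}, g_z(z) an n_z × n_v matrix, and C(x), d(x) be such that for every x ∈ X and u ∈ ℝ^{n_u}: ∇Φ(x)(f(x) + g(x)u) = f_z(Φ(x)) + g_z(Φ(x))(C(x)u + d(x)). Let φ_z : ℝ^{n_z} → ℝ be differentiable and define φ := φ_z ∘ Φ. Define Φ_U(x) := {C(x)u + d(x) : u ∈ U}, and let V : ℝ^{n_z} → Set(ℝ^{n_v}) satisfy V(z) ⊆ ⋂_{x : Φ(x) = z} Φ_U(x) for all z. Then for every x ∈ X with φ(x) = 0: if there exists v ∈ V(Φ(x)) with ∇φ_z(Φ(x)) · (f_z(Φ(x)) + g_z(Φ(x)) v) < 0, then there exists u ∈ U with ∇φ(x) · (f(x) + g(x)u) < 0. -/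
open Matrix

/-- **Theorem 1 (Feasibility consistency).**
Suppose the concrete system `ẋ = f(x) + g(x)u` and the abstract system
`ż = f_z(z) + g_z(z)v` are related through the smooth map `Φ` (with Jacobian `JΦ`)
via `∇Φ(x)(f(x) + g(x)u) = f_z(Φ(x)) + g_z(Φ(x))(C(x)u + d(x))`, let
`φ := φ_z ∘ Φ`, let `Φ_U(x) := {C(x)u + d(x) : u ∈ U}` be the implementable
abstract controls, and suppose the abstract control limit satisfies
`V(z) ⊆ ⋂_{x : Φ(x) = z} Φ_U(x)`.  Then for every `x ∈ X` with `φ(x) = 0`,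
feasibility of the abstract safe-control constraint
`φ̇_z(Φ(x), v) = ∇φ_z(Φ(x))·(f_z(Φ(x)) + g_z(Φ(x))v) < 0` for some `v ∈ V(Φ(x))`
implies feasibility of the concrete constraint
`φ̇(x, u) = ∇φ(x)·(f(x) + g(x)u) < 0` for some `u ∈ U`. -/
theorem feasibility_consistency
    {nx nu nz nv : ℕ}
    (X : Set (Fin nx → ℝ)) (U : Set (Fin nu → ℝ))
    (Φ : (Fin nx → ℝ) → (Fin nz → ℝ))
    (JΦ : (Fin nx → ℝ) → Matrix (Fin nz) (Fin nx) ℝ)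
    (hΦ : ∀ x, HasFDerivAt Φ (LinearMap.toContinuousLinearMap (Matrix.mulVecLin (JΦ x))) x)
    (f : (Fin nx → ℝ) → (Fin nx → ℝ))
    (g : (Fin nx → ℝ) → Matrix (Fin nx) (Fin nu) ℝ)
    (fz : (Fin nz → ℝ) → (Fin nz → ℝ))
    (gz : (Fin nz → ℝ) → Matrix (Fin nz) (Fin nv) ℝ)
    (C : (Fin nx → ℝ) → Matrix (Fin nv) (Fin nu) ℝ)
    (d : (Fin nx → ℝ) → (Fin nv → ℝ))
    (hrel : ∀ x ∈ X, ∀ u : Fin nu → ℝ,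
      (JΦ x) *ᵥ (f x + (g x) *ᵥ u) = fz (Φ x) + (gz (Φ x)) *ᵥ ((C x) *ᵥ u + d x))
    (φz : (Fin nz → ℝ) → ℝ)
    (hφz : Differentiable ℝ φz)
    (V : (Fin nz → ℝ) → Set (Fin nv → ℝ))
    (hV : ∀ z : Fin nz → ℝ, V z ⊆ ⋂ x ∈ {x | Φ x = z}, (fun u => (C x) *ᵥ u + d x) '' U) :
    ∀ x ∈ X, φz (Φ x) = 0 →
      (∃ v ∈ V (Φ x), fderiv ℝ φz (Φ x) (fz (Φ x) + (gz (Φ x)) *ᵥ v) < 0) →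
      ∃ u ∈ U, fderiv ℝ (φz ∘ Φ) x (f x + (g x) *ᵥ u) < 0 := by
  intro x hx hφ0 ⟨v, hvV, hv⟩
  have hmem := hV (Φ x) hvV
  simp only [Set.mem_iInter] at hmem
  obtain ⟨u, hu, huv⟩ := hmem x rfl
  refine ⟨u, hu, ?_⟩
  have hchain : fderiv ℝ (φz ∘ Φ) x =
      (fderiv ℝ φz (Φ x)).comp (LinearMap.toContinuousLinearMap (Matrix.mulVecLin (JΦ x))) := by
    have := ((hφz (Φ x)).hasFDerivAt).comp x (hΦ x)
    exact this.fderiv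
  rw [hchain]
  have : (JΦ x) *ᵥ (f x + (g x) *ᵥ u) = fz (Φ x) + (gz (Φ x)) *ᵥ v := by
    simp only [hrel x hx u]; simp only [← huv]
  simpa [this] using hv
end

section
/- Let Z ⊆ ℝ^{n_z}, 0 < M_min ≤ M_max, and R_v := [M_min, M_max]. Let φ : ℝ^{n_z} × ℝ → ℝ be differentiable with ∂φ/∂M(z, M) ≠ 0 on {(z,M) ∈ Z × R_v : φ(z,M) = 0}. Let f_z : ℝ^{n_z} → ℝ^{n_z} and g_z(z) be continuous (so that for each (z, M) the minimum m(z,M) := min over ‖v‖_p ≤ M of ∇_z φ(z,M) · (f_z(z) + g_z(z)v) is attained on the compact ball). Suppose Ṁ_* ∈ ℝ satisfies: inf over (z, M) ∈ Z × R_v with φ(z,M) = 0 of ( − m(z,M) / |∂φ/∂M(z,M)| ) > Ṁ_* ≥ 0. Then for every (z, M) ∈ Z × R_v with φ(z, M) = 0 and every Ṁ ∈ ℝ with |Ṁ| ≤ Ṁ_*, there exists v with ‖v‖_p ≤ M such that ∇_z φ(z,M) · (f_z(z) + g_z(z)v) + ∂φ/∂M(z,M) · Ṁ < 0. -/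
open Matrix
open scoped ENNReal

/-- **Lemma 5 (Persistent feasibility on the extended abstraction).**
Let `φ(z, M)` be a differentiable safety index on the extended abstract space
`Z × [M_min, M_max]` whose partial derivative `∂φ/∂M = Dφ(0,1)` does not vanish on the
zero level set, let `f_z, g_z` be continuous, and let
`m(z,M) := min_{‖v‖_p ≤ M} ∇_zφ(z,M)·(f_z(z) + g_z(z)v)` (the minimum over the compact
`ℓ^p`-ball, realized here as an infimum).  If
`Ṁ_* ≥ 0` and `inf_{(z,M) ∈ Z × R_v, φ(z,M)=0} ( −m(z,M) / |∂φ/∂M(z,M)| ) > Ṁ_*`,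
then for every `(z,M) ∈ Z × R_v` with `φ(z,M) = 0` and every `Ṁ` with `|Ṁ| ≤ Ṁ_*`
there exists `v` with `‖v‖_p ≤ M` such that
`∇_zφ(z,M)·(f_z(z) + g_z(z)v) + ∂φ/∂M(z,M)·Ṁ < 0`. -/
theorem persistent_feasibility_on_extended_abstraction
    {nz nv : ℕ} (p : ℝ≥0∞) (hp : 1 ≤ p)
    (Z : Set (Fin nz → ℝ)) (Mmin Mmax : ℝ) (hMmin : 0 < Mmin) (hMm : Mmin ≤ Mmax)
    (φ : (Fin nz → ℝ) × ℝ → ℝ) (hφ : Differentiable ℝ φ)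
    (fz : (Fin nz → ℝ) → (Fin nz → ℝ))
    (gz : (Fin nz → ℝ) → Matrix (Fin nz) (Fin nv) ℝ)
    (hfz : Continuous fz) (hgz : Continuous gz)
    (hpM : ∀ z ∈ Z, ∀ M ∈ Set.Icc Mmin Mmax, φ (z, M) = 0 →
      fderiv ℝ φ (z, M) (0, 1) ≠ 0)
    (m : (Fin nz → ℝ) → ℝ → ℝ)
    (hm : ∀ z M, m z M = sInf {y : ℝ | ∃ v : PiLp p (fun _ : Fin nv => ℝ), ‖v‖ ≤ M ∧
      y = fderiv ℝ φ (z, M) (fz z + gz z *ᵥ (fun i => v i), 0)})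
    (Mdotstar : ℝ) (hMdotstar : 0 ≤ Mdotstar)
    (hinf : Mdotstar < sInf {y : ℝ | ∃ z ∈ Z, ∃ M ∈ Set.Icc Mmin Mmax, φ (z, M) = 0 ∧
      y = -(m z M) / |fderiv ℝ φ (z, M) (0, 1)|}) :
    ∀ z ∈ Z, ∀ M ∈ Set.Icc Mmin Mmax, φ (z, M) = 0 →
      ∀ Mdot : ℝ, |Mdot| ≤ Mdotstar →
        ∃ v : PiLp p (fun _ : Fin nv => ℝ), ‖v‖ ≤ M ∧
          fderiv ℝ φ (z, M) (fz z + gz z *ᵥ (fun i => v i), 0)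
            + fderiv ℝ φ (z, M) (0, 1) * Mdot < 0 := by

  haveI : Fact (1 ≤ p) := ⟨hp⟩
  intro z hz M hM hφ0 Mdot hMdot
  set D : ℝ := fderiv ℝ φ (z, M) (0, 1) with hD
  have hDne : D ≠ 0 := hpM z hz M hM hφ0
  have hDpos : 0 < |D| := abs_pos.mpr hDne
  -- the global inf set
  set S : Set ℝ := {y : ℝ | ∃ z ∈ Z, ∃ M ∈ Set.Icc Mmin Mmax, φ (z, M) = 0 ∧
      y = -(m z M) / |fderiv ℝ φ (z, M) (0, 1)|} with hS
  have hySmem : (-(m z M) / |D|) ∈ S := ⟨z, hz, M, hM, hφ0, rfl⟩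
  have hbb : BddBelow S := by
    by_contra hnb
    rw [Real.sInf_of_not_bddBelow hnb] at hinf
    exact absurd hinf (not_lt.mpr hMdotstar)
  have hlt : Mdotstar < -(m z M) / |D| := lt_of_lt_of_le hinf (csInf_le hbb hySmem)
  have hmlt : m z M < -(Mdotstar * |D|) := by
    have := (lt_div_iff₀ hDpos).mp hlt
    linarith
  -- the inner set
  set T : Set ℝ := {y : ℝ | ∃ v : PiLp p (fun _ : Fin nv => ℝ), ‖v‖ ≤ M ∧
      y = fderiv ℝ φ (z, M) (fz z + gz z *ᵥ (fun i => v i), 0)} with hT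
  have hTne : T.Nonempty := by
    refine ⟨fderiv ℝ φ (z, M) (fz z + gz z *ᵥ (fun i => (0 : PiLp p (fun _ : Fin nv => ℝ)) i), 0),
      (0 : PiLp p (fun _ : Fin nv => ℝ)), ?_, rfl⟩
    rw [norm_zero]; exact le_trans hMmin.le hM.1
  have hDM : D * Mdot ≤ Mdotstar * |D| := by
    calc D * Mdot ≤ |D * Mdot| := le_abs_self _
    _ = |D| * |Mdot| := abs_mul _ _
    _ ≤ |D| * Mdotstar := by
        exact mul_le_mul_of_nonneg_left hMdot (abs_nonneg _)
    _ = Mdotstar * |D| := mul_comm _ _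
  have hinfT : sInf T < -(D * Mdot) := by
    rw [← hm]
    linarith
  have hex : ∃ y ∈ T, y < -(D * Mdot) := by
    by_cases hTb : BddBelow T
    · exact exists_lt_of_csInf_lt hTne hinfT
    · obtain ⟨y, hyT, hy⟩ := not_bddBelow_iff.mp hTb (-(D * Mdot))
      exact ⟨y, hyT, hy⟩
  obtain ⟨y, ⟨v, hv, hyv⟩, hylt⟩ := hex
  exact ⟨v, hv, by rw [← hyv]; linarith⟩
end

section
/- Let d_min := 0.05, and let 0 < M_min ≤ M_max and Ṁ_max ≥ 0. Suppose k ∈ ℝ satisfies k ≥ 2 · (0.8 · 1) + (0.8² − d_min²) · Ṁ_max / M_min. Then for all d ∈ [0, 0.8], ḋ ∈ [−1, 1], and M ∈ [M_min, M_max] such that d_min² − d² − k·ḋ/M = 0, we have −2 d ḋ − k · (M/M) + (k |ḋ| / M²) · Ṁ_max ≤ 0; that is, choosing d̈ = M makes φ̇ = −2dḋ − k d̈/M + (k ḋ/M²)Ṁ ≤ 0 for every Ṁ with |Ṁ| ≤ Ṁ_max. -/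
/-- **Safety index parameter derivation (Section V-B / Appendix).**
With `d_min = 0.05`, `0 < M_min ≤ M_max` and `Ṁ_max ≥ 0`, if
`k ≥ 2·(0.8·1) + (0.8² − d_min²) · Ṁ_max / M_min`, then for all `d ∈ [0, 0.8]`,
`ḋ ∈ [−1, 1]` and `M ∈ [M_min, M_max]` on the zero level set of
`φ* = d_min² − d² − k ḋ / M`, choosing `d̈ = M` gives
`φ̇* = −2dḋ − k·(M/M) + (k|ḋ|/M²)·Ṁ_max ≤ 0`, and hence
`−2dḋ − k·(M/M) + (kḋ/M²)·Ṁ ≤ 0` for every `Ṁ` with `|Ṁ| ≤ Ṁ_max`. -/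
theorem safety_index_parameter_bound
    (Mmin Mmax Mdotmax k : ℝ)
    (hMmin : 0 < Mmin) (hMm : Mmin ≤ Mmax) (hMdot : 0 ≤ Mdotmax)
    (hk : k ≥ 2 * (0.8 * 1) + ((0.8 : ℝ) ^ 2 - (0.05 : ℝ) ^ 2) * Mdotmax / Mmin) :
    ∀ d ∈ Set.Icc (0 : ℝ) 0.8, ∀ ddot ∈ Set.Icc (-1 : ℝ) 1,
      ∀ M ∈ Set.Icc Mmin Mmax,
        (0.05 : ℝ) ^ 2 - d ^ 2 - k * ddot / M = 0 →
          (-2 * d * ddot - k * (M / M) + (k * |ddot| / M ^ 2) * Mdotmax ≤ 0 ∧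
            ∀ Mdot : ℝ, |Mdot| ≤ Mdotmax →
              -2 * d * ddot - k * (M / M) + (k * ddot / M ^ 2) * Mdot ≤ 0) := by

  intro d hd ddot hdd M hM hlev
  have hM0 : 0 < M := lt_of_lt_of_le hMmin hM.1
  have hMne : M ≠ 0 := ne_of_gt hM0
  have hMM : M / M = 1 := div_self hMne
  have hCnn : (0:ℝ) ≤ (0.8:ℝ)^2 - (0.05:ℝ)^2 := by norm_num
  have hk0 : 0 < k := by
    have : 0 ≤ ((0.8:ℝ)^2 - (0.05:ℝ)^2) * Mdotmax / Mmin :=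
      div_nonneg (mul_nonneg hCnn hMdot) hMmin.le
    nlinarith
  -- level set: k * ddot = (0.05^2 - d^2) * M
  have hlev' : k * ddot = ((0.05:ℝ)^2 - d^2) * M := by
    field_simp at hlev
    linarith
  have habs : |(0.05:ℝ)^2 - d^2| ≤ (0.8:ℝ)^2 - (0.05:ℝ)^2 := by
    rw [abs_le]
    constructor <;> nlinarith [hd.1, hd.2, sq_nonneg d]
  have hkd : k * |ddot| = |(0.05:ℝ)^2 - d^2| * M := by
    have : |k * ddot| = |((0.05:ℝ)^2 - d^2) * M| := by rw [hlev']
    rwa [abs_mul, abs_mul, abs_of_pos hk0, abs_of_pos hM0] at this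
  have hA : (k * |ddot| / M ^ 2) * Mdotmax ≤ ((0.8:ℝ)^2 - (0.05:ℝ)^2) * Mdotmax / Mmin := by
    have h1 : k * |ddot| / M ^ 2 = |(0.05:ℝ)^2 - d^2| / M := by
      rw [hkd]; field_simp
    rw [h1]
    rw [div_mul_eq_mul_div]
    exact div_le_div₀ (mul_nonneg hCnn hMdot)
      (mul_le_mul_of_nonneg_right habs hMdot) hMmin hM.1
  have hdterm : -2 * d * ddot ≤ 2 * (0.8 * 1) := by
    nlinarith [hd.1, hd.2, hdd.1, hdd.2]
  have hfirst : -2 * d * ddot - k * (M / M) + (k * |ddot| / M ^ 2) * Mdotmax ≤ 0 := by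
    rw [hMM]
    have := hk
    nlinarith [hA, hdterm]
  refine ⟨hfirst, fun Mdot hMdotle => ?_⟩
  have h2 : (k * ddot / M ^ 2) * Mdot ≤ (k * |ddot| / M ^ 2) * Mdotmax := by
    calc (k * ddot / M ^ 2) * Mdot ≤ |(k * ddot / M ^ 2) * Mdot| := le_abs_self _
    _ = (k * |ddot| / M ^ 2) * |Mdot| := by
        rw [abs_mul, abs_div, abs_mul, abs_of_pos hk0, abs_of_nonneg (sq_nonneg M)]
    _ ≤ (k * |ddot| / M ^ 2) * Mdotmax := by
        apply mul_le_mul_of_nonneg_left hMdotle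
        positivity
  linarith
end
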